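/- Let S and R be independent real Gaussian random variables with mean zero, Var(S) = σ_S² > 0 and Var(R) = σ_R² > 0. Then P(sign(S) = sign(S+R)) = 1/2 + (1/π) arctan(σ_S / σ_R). -/

import Mathlib

open MeasureTheory ProbabilityTheory Real Set Filter

section Aux

lemma gpdf_cont (v : NNReal) : Continuous (gaussianPDFReal 0 v) := by
  unfold gaussianPDFReal
  fun_prop

lemma gpdf_even (v : NNReal) (x : ℝ) :
    gaussianPDFReal 0 v (-x) = gaussianPDFReal 0 v x := by
  simp [gaussianPDFReal, neg_sq]

lemma gpdf_le (v : NNReal) (x : ℝ) :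
    gaussianPDFReal 0 v x ≤ (Real.sqrt (2 * π * v))⁻¹ := by
  rw [gaussianPDFReal]
  have h1 : rexp (-(x - 0) ^ 2 / (2 * v)) ≤ 1 := by
    apply Real.exp_le_one_iff.mpr
    apply div_nonpos_of_nonpos_of_nonneg
    · simp [sq_nonneg]
    · positivity
  calc (Real.sqrt (2 * π * v))⁻¹ * rexp (-(x - 0) ^ 2 / (2 * v))
      ≤ (Real.sqrt (2 * π * v))⁻¹ * 1 := by
        apply mul_le_mul_of_nonneg_left h1 (by positivity)
    _ = _ := mul_one _

lemma gr_toReal {v : NNReal} (hv : v ≠ 0) (s : Set ℝ) (hs : MeasurableSet s) :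
    ((gaussianReal 0 v) s).toReal = ∫ x in s, gaussianPDFReal 0 v x := by
  rw [gaussianReal_apply_eq_integral 0 hv s, ENNReal.toReal_ofReal]
  exact setIntegral_nonneg hs fun x _ => gaussianPDFReal_nonneg _ _ _

lemma gr_map_neg (v : NNReal) :
    (gaussianReal 0 v).map (fun x => -x) = gaussianReal 0 v := by
  have h := gaussianReal_map_const_mul (μ := 0) (v := v) (-1)
  have h2 : (fun x : ℝ => (-1) * x) = fun x => -x := by funext x; ring
  rw [h2] at h
  rw [h]
  norm_num

lemma gr_half {v : NNReal} (hv : v ≠ 0) :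
    ((gaussianReal 0 v) (Ioi 0)).toReal = 1 / 2 := by
  set m := gaussianReal 0 v with hm
  have h0 : m {0} = 0 :=
    measure_mono_null (subset_refl _) ((gaussianReal_absolutelyContinuous 0 hv) (by simp))
  have hneg : m (Iio 0) = m (Ioi 0) := by
    have h1 : (gaussianReal 0 v).map (fun x => -x) (Ioi 0) = gaussianReal 0 v (Iio 0) := by
      rw [Measure.map_apply measurable_neg measurableSet_Ioi]
      congr 1
      ext x
      simp
    rw [hm, ← h1, gr_map_neg v]
  have hIic : m (Iic 0) = m (Ioi 0) := by
    rw [← Iio_union_right, measure_union (by simp) (measurableSet_singleton 0), h0, add_zero, hneg]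
  have htot : m (Ioi 0) + m (Iic 0) = 1 := by
    have := measure_add_measure_compl (μ := m) (measurableSet_Ioi (a := (0:ℝ)))
    rwa [compl_Ioi, measure_univ] at this
  rw [hIic] at htot
  have hfin : m (Ioi 0) ≠ ⊤ := measure_ne_top _ _
  have := ENNReal.toReal_add hfin hfin
  rw [htot, ENNReal.toReal_one] at this
  linarith

lemma sign_eq_iff {a b : ℝ} (ha : a ≠ 0) (hb : b ≠ 0) :
    Real.sign a = Real.sign b ↔ ((0 < a ∧ 0 < b) ∨ (a < 0 ∧ b < 0)) := by
  rcases ha.lt_or_gt with ha' | ha' <;> rcases hb.lt_or_gt with hb' | hb'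
  · simp only [Real.sign_of_neg ha', Real.sign_of_neg hb']
    exact ⟨fun _ => Or.inr ⟨ha', hb'⟩, fun _ => trivial⟩
  · simp only [Real.sign_of_neg ha', Real.sign_of_pos hb']
    constructor
    · intro h; norm_num at h
    · rintro (⟨h1, h2⟩ | ⟨h1, h2⟩) <;> linarith
  · simp only [Real.sign_of_pos ha', Real.sign_of_neg hb']
    constructor
    · intro h; norm_num at h
    · rintro (⟨h1, h2⟩ | ⟨h1, h2⟩) <;> linarith
  · simp only [Real.sign_of_pos ha', Real.sign_of_pos hb']
    exact ⟨fun _ => Or.inl ⟨ha', hb'⟩, fun _ => trivial⟩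

end Aux

section Deriv

lemma integral_x_exp {b : ℝ} (hb : 0 < b) :
    ∫ x in Ioi (0:ℝ), x * rexp (-b * x ^ 2) = (2 * b)⁻¹ := by
  have A : ∀ x : ℝ, HasDerivAt (fun x => -(2 * b)⁻¹ * rexp (-b * x ^ 2))
      (x * rexp (-b * x ^ 2)) x := by
    intro x
    refine (((hasDerivAt_pow 2 x).const_mul (-b)).exp.const_mul (-(2 * b)⁻¹)).congr_deriv ?_
    field_simp
    ring
  have B : Tendsto (fun y : ℝ ↦ -(2 * b)⁻¹ * rexp (-b * y ^ 2)) atTop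
      (nhds (-(2 * b)⁻¹ * 0)) := by
    refine Tendsto.const_mul _ ?_
    exact Real.tendsto_exp_atBot.comp
      ((tendsto_pow_atTop two_ne_zero).const_mul_atTop_of_neg (neg_lt_zero.2 hb))
  have := integral_Ioi_of_hasDerivAt_of_tendsto' (a := 0) (fun x _ => A x)
    (integrable_mul_exp_neg_mul_sq hb).integrableOn B
  simpa using this

lemma gpdf_toNN (v : NNReal) :
    gaussianPDF 0 v = fun x => ((gaussianPDFReal 0 v x).toNNReal : ENNReal) := rfl

lemma integral_gr_Ioi {v : NNReal} (hv : v ≠ 0) (g : ℝ → ℝ) :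
    ∫ x in Ioi (0:ℝ), g x ∂(gaussianReal 0 v)
      = ∫ x in Ioi (0:ℝ), gaussianPDFReal 0 v x * g x := by
  rw [gaussianReal_of_var_ne_zero _ hv, restrict_withDensity measurableSet_Ioi, gpdf_toNN,
    integral_withDensity_eq_integral_smul ((measurable_gaussianPDFReal 0 v).real_toNNReal) g]
  congr 1
  funext x
  rw [NNReal.smul_def, Real.coe_toNNReal _ (gaussianPDFReal_nonneg 0 v x), smul_eq_mul]

lemma integrable_gr_Ioi {v : NNReal} (hv : v ≠ 0) {g : ℝ → ℝ}
    (h : Integrable (fun x => gaussianPDFReal 0 v x * g x) (volume.restrict (Ioi 0))) :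
    Integrable g (((gaussianReal 0 v)).restrict (Ioi 0)) := by
  rw [gaussianReal_of_var_ne_zero _ hv, restrict_withDensity measurableSet_Ioi]
  rw [integrable_withDensity_iff (measurable_gaussianPDF 0 v)
    (ae_of_all _ fun x => ENNReal.ofReal_lt_top)]
  refine h.congr (ae_of_all _ fun x => ?_)
  simp only [gaussianPDF_def, ENNReal.toReal_ofReal (gaussianPDFReal_nonneg 0 v x)]
  ring

lemma integrable_pdf_mul_x {v : NNReal} (hv : v ≠ 0) (c : ℝ) :
    Integrable (fun x => gaussianPDFReal 0 v x * (c * x)) (volume.restrict (Ioi 0)) := by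
  have hb : (0:ℝ) < (2 * v)⁻¹ := by
    have : (0:ℝ) < v := by positivity
    positivity
  have h1 : Integrable (fun x : ℝ => x * rexp (-(2 * (v:ℝ))⁻¹ * x ^ 2)) :=
    integrable_mul_exp_neg_mul_sq hb
  have h2 := (h1.const_mul ((Real.sqrt (2 * π * v))⁻¹ * c)).restrict (s := Ioi 0)
  refine h2.congr (ae_of_all _ fun x => ?_)
  simp only [gaussianPDFReal_def]
  rw [show -(x - 0) ^ 2 / (2 * (v:ℝ)) = -(2 * (v:ℝ))⁻¹ * x ^ 2 by
    have : (0:ℝ) < v := by positivity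
    field_simp
    ring]
  ring


/-- FTC: derivative of the upper-tail function of a Gaussian. -/
lemma hasDerivAt_G {v : NNReal} (hv : v ≠ 0) (u : ℝ) :
    HasDerivAt (fun u => ((gaussianReal 0 v) (Ioi (-u))).toReal)
      (gaussianPDFReal 0 v u) u := by
  set f := gaussianPDFReal 0 v with hf
  have hint : Integrable f := integrable_gaussianPDFReal 0 v
  have key : ∀ w : ℝ, ((gaussianReal 0 v) (Ioi (-w))).toReal
      = 1 - ∫ y in Iic (-w), f y := by
    intro w
    rw [gr_toReal hv _ measurableSet_Ioi]
    have h1 := integral_add_compl (measurableSet_Iic (a := -w)) hint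
    rw [compl_Iic] at h1
    rw [integral_gaussianPDFReal_eq_one 0 hv] at h1
    linarith
  have hC : ∀ t : ℝ, (∫ y in Iic t, f y) = (∫ y in Iic (0:ℝ), f y) + ∫ y in (0:ℝ)..t, f y := by
    intro t
    rw [← intervalIntegral.integral_Iic_sub_Iic hint.integrableOn hint.integrableOn]
    ring
  have hD : HasDerivAt (fun t => ∫ y in (0:ℝ)..t, f y) (f (-u)) (-u) :=
    intervalIntegral.integral_hasDerivAt_right hint.intervalIntegrable
      (gpdf_cont v).aestronglyMeasurable.stronglyMeasurableAtFilter (gpdf_cont v).continuousAt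
  have hD2 : HasDerivAt (fun t => ∫ y in Iic t, f y) (f (-u)) (-u) := by
    have := (hD.const_add (∫ y in Iic (0:ℝ), f y))
    rw [show (fun t => ∫ y in Iic t, f y) = fun t => (∫ y in Iic (0:ℝ), f y) + ∫ y in (0:ℝ)..t, f y from funext hC]
    exact this
  have hD3 : HasDerivAt (fun w : ℝ => ∫ y in Iic (-w), f y) (f (-u) * (-1)) u :=
    hD2.comp u (hasDerivAt_neg u)
  have hD4 : HasDerivAt (fun w : ℝ => 1 - ∫ y in Iic (-w), f y) (-(f (-u) * (-1))) u :=
    hD3.const_sub 1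
  have heq : (-(f (-u) * (-1))) = f u := by rw [hf, gpdf_even]; ring
  rw [heq] at hD4
  have hfun : (fun w : ℝ => ((gaussianReal 0 v) (Ioi (-w))).toReal)
      = fun w : ℝ => 1 - ∫ y in Iic (-w), f y := funext key
  rw [hfun]
  exact hD4

lemma G_cont {v : NNReal} (hv : v ≠ 0) :
    Continuous (fun u : ℝ => ((gaussianReal 0 v) (Ioi (-u))).toReal) := by
  have : Differentiable ℝ (fun u : ℝ => ((gaussianReal 0 v) (Ioi (-u))).toReal) :=
    fun u => (hasDerivAt_G hv u).differentiableAt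
  exact this.continuous

lemma integrable_G {v : NNReal} (hv : v ≠ 0) {μ : Measure ℝ} [IsFiniteMeasure μ] (t : ℝ) :
    Integrable (fun x => ((gaussianReal 0 v) (Ioi (-(t * x)))).toReal) μ := by
  apply Integrable.mono' (integrable_const (1:ℝ))
  · exact ((G_cont hv).comp (continuous_const.mul continuous_id)).aestronglyMeasurable
  · refine ae_of_all _ fun x => ?_
    rw [Real.norm_eq_abs, abs_of_nonneg ENNReal.toReal_nonneg]
    calc ((gaussianReal 0 v) (Ioi (-(t * x)))).toReal
        ≤ (1 : ENNReal).toReal := ENNReal.toReal_mono (by simp) prob_le_one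
      _ = 1 := by simp

lemma hasDerivAt_H {vS vR : NNReal} (hvS : vS ≠ 0) (hvR : vR ≠ 0) (t₀ : ℝ) :
    HasDerivAt
      (fun t => ∫ x in Ioi (0:ℝ),
        ((gaussianReal 0 vR) (Ioi (-(t * x)))).toReal ∂(gaussianReal 0 vS))
      (Real.sqrt vS * Real.sqrt vR / (2 * π * (vR + t₀ ^ 2 * vS))) t₀ := by
  have hvS' : vS ≠ 0 := hvS
  have hvR' : vR ≠ 0 := hvR
  have hvSpos : (0:ℝ) < vS := by positivity
  have hvRpos : (0:ℝ) < vR := by positivity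
  set M := (gaussianReal 0 vS).restrict (Ioi 0) with hM
  have key := hasDerivAt_integral_of_dominated_loc_of_deriv_le (μ := M)
    (F := fun t x => ((gaussianReal 0 vR) (Ioi (-(t * x)))).toReal)
    (F' := fun t x => gaussianPDFReal 0 vR (t * x) * x)
    (x₀ := t₀) (bound := fun x => (Real.sqrt (2 * π * vR))⁻¹ * x)
    (s := Metric.ball t₀ 1) (Metric.ball_mem_nhds t₀ one_pos)
    (Filter.Eventually.of_forall fun t =>
      (((G_cont hvR').comp (continuous_const.mul continuous_id)).aestronglyMeasurable))
    (integrable_G hvR' t₀)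
    (((gpdf_cont vR).comp (continuous_const.mul continuous_id)).mul
      continuous_id).aestronglyMeasurable
    ?_ ?_ ?_
  · -- conclude: rewrite the derivative integral
    have hder := key.2
    have hval : (∫ x, gaussianPDFReal 0 vR (t₀ * x) * x ∂M)
        = Real.sqrt vS * Real.sqrt vR / (2 * π * (vR + t₀ ^ 2 * vS)) := by
      rw [hM]
      have : (∫ x in Ioi (0:ℝ), gaussianPDFReal 0 vR (t₀ * x) * x ∂(gaussianReal 0 vS))
          = ∫ x in Ioi (0:ℝ),
              gaussianPDFReal 0 vS x * (gaussianPDFReal 0 vR (t₀ * x) * x) := by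
        exact integral_gr_Ioi hvS' _
      rw [this]
      have hb : (0:ℝ) < (2 * (vS:ℝ))⁻¹ + t₀ ^ 2 * (2 * (vR:ℝ))⁻¹ := by positivity
      have heq : ∀ x : ℝ, gaussianPDFReal 0 vS x * (gaussianPDFReal 0 vR (t₀ * x) * x)
          = ((Real.sqrt (2 * π * vS))⁻¹ * (Real.sqrt (2 * π * vR))⁻¹)
            * (x * rexp (-((2 * (vS:ℝ))⁻¹ + t₀ ^ 2 * (2 * (vR:ℝ))⁻¹) * x ^ 2)) := by
        intro x
        simp only [gaussianPDFReal_def]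
        rw [show -((2 * (vS:ℝ))⁻¹ + t₀ ^ 2 * (2 * (vR:ℝ))⁻¹) * x ^ 2
            = (-(x - 0) ^ 2 / (2 * vS)) + (-(t₀ * x - 0) ^ 2 / (2 * vR)) by
          field_simp
          ring]
        rw [Real.exp_add]
        ring
      simp_rw [heq]
      rw [integral_const_mul, integral_x_exp hb]
      have h1 : Real.sqrt (2 * π * vS) = Real.sqrt (2 * π) * Real.sqrt vS :=
        Real.sqrt_mul (by positivity) _
      have h2 : Real.sqrt (2 * π * vR) = Real.sqrt (2 * π) * Real.sqrt vR :=
        Real.sqrt_mul (by positivity) _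
      have h3 : Real.sqrt (2 * π) * Real.sqrt (2 * π) = 2 * π :=
        Real.mul_self_sqrt (by positivity)
      have h4 : Real.sqrt (vS:ℝ) * Real.sqrt (vS:ℝ) = vS := Real.mul_self_sqrt vS.2
      have h5 : Real.sqrt (vR:ℝ) * Real.sqrt (vR:ℝ) = vR := Real.mul_self_sqrt vR.2
      have hsS : (0:ℝ) < Real.sqrt vS := Real.sqrt_pos.mpr hvSpos
      have hsR : (0:ℝ) < Real.sqrt vR := Real.sqrt_pos.mpr hvRpos
      rw [h1, h2]
      rw [show 2 * ((2 * (vS:ℝ))⁻¹ + t₀ ^ 2 * (2 * (vR:ℝ))⁻¹)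
          = ((vR:ℝ) + t₀ ^ 2 * vS) / (vS * vR) by field_simp]
      rw [inv_div]
      rw [← h3, ← h4, ← h5]
      have hπ : (0:ℝ) < Real.sqrt (2 * π) := Real.sqrt_pos.mpr (by positivity)
      field_simp
      rw [Real.sq_sqrt (sq_nonneg _), Real.sq_sqrt (sq_nonneg _), Real.sq_sqrt (sq_nonneg _)]
    rw [← hval]
    exact hder
  · -- bound
    have hx : ∀ᵐ x ∂M, x ∈ Ioi (0:ℝ) := ae_restrict_mem measurableSet_Ioi
    refine hx.mono fun x hx t _ => ?_
    have hxpos : (0:ℝ) < x := hx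
    rw [Real.norm_eq_abs, abs_of_nonneg
      (mul_nonneg (gaussianPDFReal_nonneg 0 vR _) hxpos.le)]
    exact mul_le_mul_of_nonneg_right (gpdf_le vR _) hxpos.le
  · -- bound integrable
    exact integrable_gr_Ioi hvS' (integrable_pdf_mul_x hvS' _)
  · -- differentiability
    refine ae_of_all _ fun x t _ => ?_
    have h := (hasDerivAt_G hvR' (t * x)).comp t (hasDerivAt_mul_const x)
    exact h

lemma H_zero {vS vR : NNReal} (hvS : vS ≠ 0) (hvR : vR ≠ 0) :
    (∫ x in Ioi (0:ℝ),
        ((gaussianReal 0 vR) (Ioi (-((0:ℝ) * x)))).toReal ∂(gaussianReal 0 vS)) = 1 / 4 := by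
  simp only [zero_mul, neg_zero]
  rw [integral_const, smul_eq_mul, measureReal_def, Measure.restrict_apply_univ, gr_half hvS, gr_half hvR]
  norm_num

lemma H_one {vS vR : NNReal} (hvS : 0 < vS) (hvR : 0 < vR) :
    (∫ x in Ioi (0:ℝ),
        ((gaussianReal 0 vR) (Ioi (-((1:ℝ) * x)))).toReal ∂(gaussianReal 0 vS)) =
      1 / 4 + (1 / (2 * π)) * Real.arctan (Real.sqrt vS / Real.sqrt vR) := by
  have hvS' : vS ≠ 0 := hvS.ne'
  have hvR' : vR ≠ 0 := hvR.ne'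
  have hvSpos : (0:ℝ) < vS := by positivity
  have hvRpos : (0:ℝ) < vR := by positivity
  have hsS : (0:ℝ) < Real.sqrt vS := Real.sqrt_pos.mpr hvSpos
  have hsR : (0:ℝ) < Real.sqrt vR := Real.sqrt_pos.mpr hvRpos
  set k : ℝ := Real.sqrt vS / Real.sqrt vR with hk
  set f : ℝ → ℝ := fun t =>
    (∫ x in Ioi (0:ℝ), ((gaussianReal 0 vR) (Ioi (-(t * x)))).toReal ∂(gaussianReal 0 vS))
      - (1 / (2 * π)) * Real.arctan (k * t) with hfdef
  have hderiv : ∀ t : ℝ, HasDerivAt f 0 t := by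
    intro t
    have h1 := hasDerivAt_H hvS' hvR' t
    have ha := (Real.hasDerivAt_arctan (k * t)).comp t ((hasDerivAt_id t).const_mul k)
    have h2 := ha.const_mul (1 / (2 * π))
    have hval : 1 / (2 * π) * (1 / (1 + (k * t) ^ 2) * (k * 1))
        = Real.sqrt vS * Real.sqrt vR / (2 * π * (vR + t ^ 2 * vS)) := by
      rw [hk]
      have h4 : Real.sqrt (vS:ℝ) * Real.sqrt (vS:ℝ) = vS := Real.mul_self_sqrt vS.2
      have h5 : Real.sqrt (vR:ℝ) * Real.sqrt (vR:ℝ) = vR := Real.mul_self_sqrt vR.2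
      have hD : (0:ℝ) < (vR:ℝ) + t ^ 2 * vS := by positivity
      have hE : (0:ℝ) < 1 + (Real.sqrt vS / Real.sqrt vR * t) ^ 2 := by positivity
      field_simp
      ring_nf
      linear_combination (-1:ℝ) * h5 - t ^ 2 * h4
    rw [hval] at h2
    have h3 := h1.sub h2
    rw [sub_self] at h3
    exact h3
  have hconst : f 1 = f 0 :=
    is_const_of_deriv_eq_zero (fun t => (hderiv t).differentiableAt)
      (fun t => (hderiv t).deriv) 1 0
  have hf0 : f 0 = 1 / 4 := by
    rw [hfdef]
    simp only [mul_zero, Real.arctan_zero]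
    rw [H_zero hvS' hvR']
    ring
  have hf1 : f 1 =
      (∫ x in Ioi (0:ℝ), ((gaussianReal 0 vR) (Ioi (-((1:ℝ) * x)))).toReal ∂(gaussianReal 0 vS))
        - (1 / (2 * π)) * Real.arctan k := by
    rw [hfdef]
    simp
  rw [hf1, hf0] at hconst
  rw [hk] at hconst
  linarith

end Deriv

section Joint

lemma msetA : MeasurableSet {p : ℝ × ℝ | 0 < p.1 ∧ 0 < p.1 + p.2} :=
  (measurableSet_lt measurable_const measurable_fst).inter
    (measurableSet_lt measurable_const (measurable_fst.add measurable_snd))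

lemma measA {Ω : Type*} [MeasurableSpace Ω] (μ : Measure Ω) [IsProbabilityMeasure μ]
    (S R : Ω → ℝ) (hS : Measurable S) (hR : Measurable R)
    (vS vR : NNReal)
    (hSlaw : μ.map S = gaussianReal 0 vS) (hRlaw : μ.map R = gaussianReal 0 vR)
    (hindep : IndepFun S R μ) :
    μ {ω | 0 < S ω ∧ 0 < S ω + R ω} =
      ((gaussianReal 0 vS).prod (gaussianReal 0 vR)) {p : ℝ × ℝ | 0 < p.1 ∧ 0 < p.1 + p.2} := by
  have hmap := (indepFun_iff_map_prod_eq_prod_map_map hS.aemeasurable hR.aemeasurable).mp hindep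
  rw [hSlaw, hRlaw] at hmap
  have h : {ω | 0 < S ω ∧ 0 < S ω + R ω} =
      (fun ω => (S ω, R ω)) ⁻¹' {p : ℝ × ℝ | 0 < p.1 ∧ 0 < p.1 + p.2} := rfl
  rw [h, ← Measure.map_apply (hS.prodMk hR) msetA, hmap]

lemma prodA_val {vS vR : NNReal} (hvS : 0 < vS) (hvR : 0 < vR) :
    (((gaussianReal 0 vS).prod (gaussianReal 0 vR))
        {p : ℝ × ℝ | 0 < p.1 ∧ 0 < p.1 + p.2}).toReal =
      1 / 4 + (1 / (2 * π)) * Real.arctan (Real.sqrt vS / Real.sqrt vR) := by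
  have hvS' : vS ≠ 0 := hvS.ne'
  have hvR' : vR ≠ 0 := hvR.ne'
  rw [Measure.prod_apply msetA]
  have hslice : ∀ x : ℝ, (Prod.mk x ⁻¹' {p : ℝ × ℝ | 0 < p.1 ∧ 0 < p.1 + p.2})
      = if 0 < x then Ioi (-x) else ∅ := by
    intro x
    ext y
    by_cases hx : 0 < x
    · simp [hx, neg_lt_iff_pos_add, add_comm]
    · simp [hx]
  have hmeas : AEMeasurable
      (fun x => (gaussianReal 0 vR) (Prod.mk x ⁻¹' {p : ℝ × ℝ | 0 < p.1 ∧ 0 < p.1 + p.2}))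
      (gaussianReal 0 vS) := (measurable_measure_prodMk_left msetA).aemeasurable
  have hfin : ∀ᵐ x ∂(gaussianReal 0 vS),
      (gaussianReal 0 vR) (Prod.mk x ⁻¹' {p : ℝ × ℝ | 0 < p.1 ∧ 0 < p.1 + p.2}) < ⊤ :=
    ae_of_all _ fun x => lt_of_le_of_lt prob_le_one (by norm_num)
  rw [← integral_toReal hmeas hfin]
  have hrw : (fun x => ((gaussianReal 0 vR)
        (Prod.mk x ⁻¹' {p : ℝ × ℝ | 0 < p.1 ∧ 0 < p.1 + p.2})).toReal)
      = Set.indicator (Ioi (0:ℝ)) (fun x => ((gaussianReal 0 vR) (Ioi (-((1:ℝ) * x)))).toReal) := by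
    funext x
    rw [hslice x]
    by_cases hx : 0 < x
    · rw [if_pos hx, Set.indicator_of_mem (mem_Ioi.mpr hx)]
      norm_num
    · rw [if_neg hx, Set.indicator_of_notMem (by simpa using hx)]
      simp
  rw [hrw, integral_indicator measurableSet_Ioi]
  exact H_one hvS hvR

end Joint

/-- **Sign-agreement probability for independent centred Gaussians.** If `S ∼ N(0, σS²)`
and `R ∼ N(0, σR²)` are independent with `σS, σR > 0`, then
`P(sign S = sign (S + R)) = 1/2 + (1/π) arctan(σS/σR)`. -/
theorem stmt_9 {Ω : Type*} [MeasurableSpace Ω] (μ : Measure Ω) [IsProbabilityMeasure μ]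
    (S R : Ω → ℝ) (hS : Measurable S) (hR : Measurable R)
    (vS vR : NNReal) (hvS : 0 < vS) (hvR : 0 < vR)
    (hSlaw : μ.map S = gaussianReal 0 vS) (hRlaw : μ.map R = gaussianReal 0 vR)
    (hindep : IndepFun S R μ) :
    (μ {ω | Real.sign (S ω) = Real.sign (S ω + R ω)}).toReal =
      1 / 2 + (1 / Real.pi) * Real.arctan (Real.sqrt vS / Real.sqrt vR) := by
  have hvS' : vS ≠ 0 := hvS.ne'
  have hvR' : vR ≠ 0 := hvR.ne'
  -- null sets
  have hN1 : μ {ω | S ω = 0} = 0 := by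
    have : {ω | S ω = 0} = S ⁻¹' {0} := rfl
    rw [this, ← Measure.map_apply hS (measurableSet_singleton 0), hSlaw]
    exact (gaussianReal_absolutelyContinuous 0 hvS') (by simp)
  have hmap := (indepFun_iff_map_prod_eq_prod_map_map hS.aemeasurable hR.aemeasurable).mp hindep
  rw [hSlaw, hRlaw] at hmap
  have hN2 : μ {ω | S ω + R ω = 0} = 0 := by
    have hset : {ω | S ω + R ω = 0} = (fun ω => (S ω, R ω)) ⁻¹' {p : ℝ × ℝ | p.1 + p.2 = 0} := rfl
    have hms : MeasurableSet {p : ℝ × ℝ | p.1 + p.2 = 0} :=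
      measurableSet_eq_fun (measurable_fst.add measurable_snd) measurable_const
    rw [hset, ← Measure.map_apply (hS.prodMk hR) hms, hmap, Measure.prod_apply hms]
    have : ∀ x : ℝ, (gaussianReal 0 vR) (Prod.mk x ⁻¹' {p : ℝ × ℝ | p.1 + p.2 = 0}) = 0 := by
      intro x
      have h1 : (Prod.mk x ⁻¹' {p : ℝ × ℝ | p.1 + p.2 = 0}) = {-x} := by
        ext y
        simp only [Set.mem_preimage, Set.mem_setOf_eq, Set.mem_singleton_iff]
        constructor <;> intro h <;> linarith
      rw [h1]
      exact (gaussianReal_absolutelyContinuous 0 hvR') (by simp)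
    simp only [this]
    simp
  have hN : μ (({ω | S ω = 0} : Set Ω) ∪ {ω | S ω + R ω = 0}) = 0 :=
    measure_union_null hN1 hN2
  -- the event equals A ∪ B up to null sets
  set A := {ω | 0 < S ω ∧ 0 < S ω + R ω} with hA
  set B := {ω | S ω < 0 ∧ S ω + R ω < 0} with hB
  have hAmeas : MeasurableSet A :=
    (measurableSet_lt measurable_const hS).inter
      (measurableSet_lt measurable_const (hS.add hR))
  have hBmeas : MeasurableSet B :=
    (measurableSet_lt hS measurable_const).inter
      (measurableSet_lt (hS.add hR) measurable_const)
  set C : Set Ω := A ∪ B with hC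
  have hae : {ω | Real.sign (S ω) = Real.sign (S ω + R ω)} =ᵐ[μ] C := by
    have h0 : ∀ᵐ ω ∂μ, ω ∉ (({ω | S ω = 0} : Set Ω) ∪ {ω | S ω + R ω = 0}) :=
      measure_eq_zero_iff_ae_notMem.mp hN
    refine h0.mono fun ω hω => ?_
    have hS0 : S ω ≠ 0 := fun h => hω (Or.inl h)
    have hSR0 : S ω + R ω ≠ 0 := fun h => hω (Or.inr h)
    have := sign_eq_iff hS0 hSR0
    simp only [eq_iff_iff]
    constructor
    · intro h
      rcases this.mp h with h' | h'
      · exact Or.inl h'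
      · exact Or.inr h'
    · intro h
      rcases h with h' | h'
      · exact this.mpr (Or.inl h')
      · exact this.mpr (Or.inr h')
  rw [measure_congr hae, hC]
  have hdisj : Disjoint A B := by
    rw [Set.disjoint_left]
    intro ω hωA hωB
    exact absurd hωA.1 (not_lt.mpr hωB.1.le)
  rw [measure_union hdisj hBmeas]
  -- A
  have hAval : μ A =
      ((gaussianReal 0 vS).prod (gaussianReal 0 vR)) {p : ℝ × ℝ | 0 < p.1 ∧ 0 < p.1 + p.2} :=
    measA μ S R hS hR vS vR hSlaw hRlaw hindep
  -- B via negation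
  have hSneg : μ.map (fun ω => -(S ω)) = gaussianReal 0 vS := by
    have h1 : (fun ω => -(S ω)) = (fun x : ℝ => -x) ∘ S := rfl
    rw [h1, ← Measure.map_map measurable_neg hS, hSlaw, gr_map_neg]
  have hRneg : μ.map (fun ω => -(R ω)) = gaussianReal 0 vR := by
    have h1 : (fun ω => -(R ω)) = (fun x : ℝ => -x) ∘ R := rfl
    rw [h1, ← Measure.map_map measurable_neg hR, hRlaw, gr_map_neg]
  have hindepneg : IndepFun (fun ω => -(S ω)) (fun ω => -(R ω)) μ :=
    hindep.comp measurable_neg measurable_neg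
  have hBval : μ B =
      ((gaussianReal 0 vS).prod (gaussianReal 0 vR)) {p : ℝ × ℝ | 0 < p.1 ∧ 0 < p.1 + p.2} := by
    have h1 : B = {ω | 0 < -(S ω) ∧ 0 < -(S ω) + -(R ω)} := by
      ext ω
      simp only [hB, Set.mem_setOf_eq]
      constructor <;> intro h <;> constructor <;> linarith [h.1, h.2]
    rw [h1]
    exact measA μ _ _ hS.neg hR.neg vS vR hSneg hRneg hindepneg
  rw [ENNReal.toReal_add (measure_ne_top _ _) (measure_ne_top _ _), hAval, hBval,
    prodA_val hvS hvR]
  have hπ : π ≠ 0 := Real.pi_ne_zero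
  field_simp
  ring
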